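/- Let n ≥ 3. A bipartition of n is a pair (λ', λ'') of partitions with |λ'| + |λ''| = n. Define ff_n(λ', λ'') in the free abelian group on bipartitions of n−1 by ff_n(λ', λ'') = Σ (μ', λ'') + Σ (λ', μ''), where μ' runs over the partitions obtained from λ' by decreasing by 1 a part λ'_i with λ'_i > λ'_{i+1}, and μ'' similarly for λ''. If (λ', λ'') and (ν', ν'') are bipartitions of n with ff_n(λ', λ'') = ff_n(ν', ν''), then (λ', λ'') = (ν', ν''). -/

import Mathlib

open scoped Classical

noncomputable section

/-- `lam : ℕ → ℕ` is a partition of `n`: a weakly decreasing sequence of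
nonnegative integers, eventually zero, with sum `n`. -/
def IsPartitionFun (n : ℕ) (lam : ℕ → ℕ) : Prop :=
  Antitone lam ∧ (Function.support lam).Finite ∧ ∑ᶠ i, lam i = n

/-- `f_n(λ) = Σ_{i : λ_i > λ_{i+1}} [λ with λ_i decreased by 1]`, an element of the
free abelian group on sequences (for partitions `λ` of `n`, all terms are
partitions of `n−1`, so equality of such elements is equality in the free
abelian group `(P_{n-1})` on partitions of `n−1`). -/
def partDec (lam : ℕ → ℕ) : FreeAbelianGroup (ℕ → ℕ) :=
  ∑ᶠ i ∈ {i : ℕ | lam (i + 1) < lam i},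
    FreeAbelianGroup.of (Function.update lam i (lam i - 1))

/-- `p = (λ', λ'')` is a bipartition of `n`: `λ'`, `λ''` are partitions with
`|λ'| + |λ''| = n`. -/
def IsBipartitionFun (n : ℕ) (p : (ℕ → ℕ) × (ℕ → ℕ)) : Prop :=
  ∃ a b : ℕ, IsPartitionFun a p.1 ∧ IsPartitionFun b p.2 ∧ a + b = n

/-- `ff_n(λ', λ'') = f(λ') ⊗ λ'' + λ' ⊗ f(λ'')`, an element of the free abelian
group on pairs of sequences (for bipartitions of `n`, all terms are bipartitions
of `n−1`, so equalities below are equalities in the free abelian group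
`(BP_{n-1})` on bipartitions of `n−1`). -/
def bipartDec (p : (ℕ → ℕ) × (ℕ → ℕ)) : FreeAbelianGroup ((ℕ → ℕ) × (ℕ → ℕ)) :=
  (∑ᶠ i ∈ {i : ℕ | p.1 (i + 1) < p.1 i},
    FreeAbelianGroup.of (Function.update p.1 i (p.1 i - 1), p.2)) +
  (∑ᶠ i ∈ {i : ℕ | p.2 (i + 1) < p.2 i},
    FreeAbelianGroup.of (p.1, Function.update p.2 i (p.2 i - 1)))


namespace S3aux

def dec (lam : ℕ → ℕ) (i : ℕ) : ℕ → ℕ := Function.update lam i (lam i - 1)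

def coeff {α : Type*} (x : α) : FreeAbelianGroup α →+ ℤ :=
  FreeAbelianGroup.lift (fun y => if y = x then (1:ℤ) else 0)

lemma coeff_of {α : Type*} (x y : α) :
    coeff x (FreeAbelianGroup.of y) = if y = x then (1:ℤ) else 0 :=
  FreeAbelianGroup.lift_apply_of _ _

lemma D_finite {lam : ℕ → ℕ} (h : (Function.support lam).Finite) :
    {i : ℕ | lam (i + 1) < lam i}.Finite :=
  h.subset (fun i hi => by
    simp only [Set.mem_setOf_eq] at hi
    simp only [Function.mem_support]
    omega)


def PP (p x : (ℕ → ℕ) × (ℕ → ℕ)) : Prop :=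
  (∃ i, p.1 (i + 1) < p.1 i ∧ x = (dec p.1 i, p.2)) ∨
  (∃ j, p.2 (j + 1) < p.2 j ∧ x = (p.1, dec p.2 j))

lemma coeff_of_nonneg {β : Type*} (x y : β) : (0:ℤ) ≤ coeff x (FreeAbelianGroup.of y) := by
  rw [coeff_of]; split <;> norm_num

lemma sum_coeff_ne_zero_iff {ι β : Type*} (s : Finset ι) (g : ι → β) (x : β) :
    (∑ i ∈ s, coeff x (FreeAbelianGroup.of (g i))) ≠ 0 ↔ ∃ i ∈ s, g i = x := by
  have n : ∀ i ∈ s, (0:ℤ) ≤ coeff x (FreeAbelianGroup.of (g i)) := fun i _ => coeff_of_nonneg x (g i)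
  rw [Ne, Finset.sum_eq_zero_iff_of_nonneg n]
  simp only [coeff_of, ite_eq_right_iff, one_ne_zero, imp_false, not_forall, not_not,
    exists_prop]

lemma mem_iff (p : (ℕ → ℕ) × (ℕ → ℕ))
    (h1 : (Function.support p.1).Finite) (h2 : (Function.support p.2).Finite)
    (x : (ℕ → ℕ) × (ℕ → ℕ)) :
    coeff x (bipartDec p) ≠ 0 ↔ PP p x := by
  rw [bipartDec, map_add,
    finsum_mem_eq_finite_toFinset_sum _ (D_finite h1),
    finsum_mem_eq_finite_toFinset_sum _ (D_finite h2),
    map_sum, map_sum]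
  have e1 := sum_coeff_ne_zero_iff (D_finite h1).toFinset
    (fun i => ((Function.update p.1 i (p.1 i - 1), p.2) : (ℕ → ℕ) × (ℕ → ℕ))) x
  have e2 := sum_coeff_ne_zero_iff (D_finite h2).toFinset
    (fun j => ((p.1, Function.update p.2 j (p.2 j - 1)) : (ℕ → ℕ) × (ℕ → ℕ))) x
  have n1 : (0:ℤ) ≤ ∑ i ∈ (D_finite h1).toFinset,
      coeff x (FreeAbelianGroup.of ((Function.update p.1 i (p.1 i - 1), p.2))) :=
    Finset.sum_nonneg fun i _ => coeff_of_nonneg _ _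
  have n2 : (0:ℤ) ≤ ∑ j ∈ (D_finite h2).toFinset,
      coeff x (FreeAbelianGroup.of ((p.1, Function.update p.2 j (p.2 j - 1)))) :=
    Finset.sum_nonneg fun j _ => coeff_of_nonneg _ _
  rw [PP]
  constructor
  · intro hne
    have : (∑ i ∈ (D_finite h1).toFinset,
        coeff x (FreeAbelianGroup.of ((Function.update p.1 i (p.1 i - 1), p.2)))) ≠ 0 ∨
        (∑ j ∈ (D_finite h2).toFinset,
        coeff x (FreeAbelianGroup.of ((p.1, Function.update p.2 j (p.2 j - 1))))) ≠ 0 := by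
      by_contra hc; push_neg at hc; rw [hc.1, hc.2] at hne; exact hne rfl
    rcases this with hA | hB
    · obtain ⟨i, hi, hix⟩ := e1.mp hA
      exact Or.inl ⟨i, by simpa using (Set.Finite.mem_toFinset _).mp hi,
        by rw [← hix]; rfl⟩
    · obtain ⟨j, hj, hjx⟩ := e2.mp hB
      exact Or.inr ⟨j, by simpa using (Set.Finite.mem_toFinset _).mp hj,
        by rw [← hjx]; rfl⟩
  · rintro (⟨i, hi, rfl⟩ | ⟨j, hj, rfl⟩)
    · have hA := e1.mpr ⟨i, (Set.Finite.mem_toFinset _).mpr hi, rfl⟩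
      omega
    · have hB := e2.mpr ⟨j, (Set.Finite.mem_toFinset _).mpr hj, rfl⟩
      omega

lemma dec_apply_self (lam : ℕ → ℕ) (i : ℕ) : dec lam i i = lam i - 1 := by
  simp [dec]

lemma dec_apply_ne (lam : ℕ → ℕ) {i j : ℕ} (h : j ≠ i) : dec lam i j = lam j := by
  simp [dec, Function.update_of_ne h]

lemma dec_le (lam : ℕ → ℕ) (i j : ℕ) : dec lam i j ≤ lam j := by
  rcases eq_or_ne j i with rfl | h
  · rw [dec_apply_self]; omega
  · rw [dec_apply_ne _ h]

lemma dec_ne {lam : ℕ → ℕ} {i : ℕ} (hi : lam (i + 1) < lam i) : dec lam i ≠ lam := by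
  intro h
  have := congrFun h i
  rw [dec_apply_self] at this
  omega

lemma dec_inj {lam : ℕ → ℕ} {i i' : ℕ} (hi : lam (i + 1) < lam i) (hii' : i ≠ i') :
    dec lam i ≠ dec lam i' := by
  intro h
  have := congrFun h i
  rw [dec_apply_self, dec_apply_ne _ hii'] at this
  omega

lemma const_of_no_dec {lam : ℕ → ℕ} (hant : Antitone lam)
    (hno : ∀ i, ¬ lam (i + 1) < lam i) : ∀ i, lam i = lam 0 := by
  intro i
  induction i with
  | zero => rfl
  | succ k ih =>
    have h1 : lam k ≤ lam (k + 1) := not_lt.mp (hno k)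
    have h2 : lam (k + 1) ≤ lam k := hant (Nat.le_succ k)
    omega

lemma zero_of_no_dec {m : ℕ} {lam : ℕ → ℕ} (h : IsPartitionFun m lam)
    (hno : ¬ ∃ i, lam (i + 1) < lam i) : lam = (fun _ => 0) ∧ m = 0 := by
  obtain ⟨hant, hfin, hsum⟩ := h
  push_neg at hno
  have hc := const_of_no_dec hant (fun i => not_lt.mpr (hno i))
  obtain ⟨N, hN⟩ := (hfin.infinite_compl).nonempty
  simp only [Set.mem_compl_iff, Function.mem_support, not_not] at hN
  have h0 : lam 0 = 0 := by rw [← hc N]; exact hN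
  have hz : lam = (fun _ => 0) := funext fun i => by rw [hc i, h0]
  refine ⟨hz, ?_⟩
  rw [← hsum, hz]
  exact finsum_zero

lemma exists_dec {m : ℕ} {lam : ℕ → ℕ} (h : IsPartitionFun m lam) (hm : m ≠ 0) :
    ∃ i, lam (i + 1) < lam i := by
  by_contra hno
  exact hm (zero_of_no_dec h hno).2

lemma sum_eq_one_of_dec_eq_zero {lam : ℕ → ℕ} {k : ℕ} (hk : lam (k + 1) < lam k)
    (h0 : dec lam k = (fun _ => 0)) : ∑ᶠ i, lam i = 1 := by
  have hz : ∀ j, j ≠ k → lam j = 0 := by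
    intro j hj
    have := congrFun h0 j
    rwa [dec_apply_ne _ hj] at this
  have hk1 : lam k = 1 := by
    have := congrFun h0 k
    rw [dec_apply_self] at this
    omega
  rw [finsum_eq_single lam k hz, hk1]

lemma rect_struct {lam : ℕ → ℕ} (hant : Antitone lam)
    (hfin : (Function.support lam).Finite) {a : ℕ} (ha : lam (a + 1) < lam a)
    (huniq : ∀ i, lam (i + 1) < lam i → i = a) :
    ∀ j, lam j = if j ≤ a then lam a else 0 := by
  have step : ∀ i, i ≠ a → lam i = lam (i + 1) := by
    intro i hi
    have h1 : ¬ lam (i + 1) < lam i := fun hlt => hi (huniq i hlt)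
    have h2 : lam (i + 1) ≤ lam i := hant (Nat.le_succ i)
    omega
  have part1 : ∀ d j, j + d = a → lam j = lam a := by
    intro d
    induction d with
    | zero => intro j hj; rw [show j = a by omega]
    | succ e ih =>
      intro j hj
      have hja : j ≠ a := by omega
      rw [step j hja]
      exact ih (j + 1) (by omega)
  have part2a : ∀ d, lam (a + 1 + d) = lam (a + 1) := by
    intro d
    induction d with
    | zero => rfl
    | succ e ih =>
      have : a + 1 + (e + 1) = (a + 1 + e) + 1 := by omega
      rw [this, ← step (a + 1 + e) (by omega), ih]
  have part2b : lam (a + 1) = 0 := by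
    by_contra h0
    have hsub : Set.Ici (a + 1) ⊆ Function.support lam := by
      intro j hj
      have hj' : a + 1 ≤ j := hj
      have : lam j = lam (a + 1) := by
        have : j = a + 1 + (j - (a + 1)) := by omega
        rw [this, part2a]
      rw [Function.mem_support, this]
      exact h0
    exact ((Set.Ici_infinite (a + 1)).mono hsub) hfin
  intro j
  by_cases hj : j ≤ a
  · rw [if_pos hj]
    exact part1 (a - j) j (by omega)
  · rw [if_neg hj]
    have : j = a + 1 + (j - (a + 1)) := by omega
    rw [this, part2a, part2b]

lemma rect_ne {n a a' : ℕ} {lam nu : ℕ → ℕ} (hn : 3 ≤ n) (hsuml : ∑ᶠ i, lam i = n)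
    (hb : 1 ≤ lam a) (hb' : 1 ≤ nu a')
    (hr1 : ∀ j, lam j = if j ≤ a then lam a else 0)
    (hr2 : ∀ j, nu j = if j ≤ a' then nu a' else 0)
    (hc : dec lam a = dec nu a') (hlt : a < a') : False := by
  have Ea' := congrFun hc a'
  rw [dec_apply_ne _ (by omega : a' ≠ a), dec_apply_self, hr1 a', if_neg (by omega)] at Ea'
  -- Ea' : 0 = nu a' - 1, so nu a' = 1
  have hb'1 : nu a' = 1 := by omega
  have Ea := congrFun hc a
  rw [dec_apply_self, dec_apply_ne _ (by omega : a ≠ a'), hr2 a, if_pos (by omega)] at Ea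
  -- Ea : lam a - 1 = nu a' = 1, so lam a = 2
  have hb2 : lam a = 2 := by omega
  rcases Nat.eq_zero_or_pos a with rfl | hapos
  · -- lam = (2), sum = 2 < 3
    have hz : ∀ j, j ≠ 0 → lam j = 0 := by
      intro j hj
      rw [hr1 j, if_neg (by omega)]
    have : ∑ᶠ i, lam i = lam 0 := finsum_eq_single lam 0 hz
    rw [hsuml, hr1 0, if_pos (by omega)] at this
    omega
  · have E0 := congrFun hc 0
    rw [dec_apply_ne _ (by omega : (0:ℕ) ≠ a), dec_apply_ne _ (by omega : (0:ℕ) ≠ a'),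
      hr1 0, hr2 0, if_pos (by omega), if_pos (by omega)] at E0
    omega

lemma decs_inj {n : ℕ} {lam nu : ℕ → ℕ} (hl : IsPartitionFun n lam)
    (hv : IsPartitionFun n nu) (hn : 3 ≤ n)
    (hset : ∀ x : ℕ → ℕ, (∃ i, lam (i + 1) < lam i ∧ x = dec lam i) ↔
      (∃ k, nu (k + 1) < nu k ∧ x = dec nu k)) : lam = nu := by
  have hn0 : n ≠ 0 := by omega
  obtain ⟨i0, hi0⟩ := exists_dec hl hn0
  obtain ⟨k0, hk0⟩ := exists_dec hv hn0
  by_cases htwo : ∃ i i', lam (i + 1) < lam i ∧ lam (i' + 1) < lam i' ∧ i ≠ i'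
  · obtain ⟨i, i', hi, hi', hii'⟩ := htwo
    obtain ⟨k, hk, hek⟩ := (hset _).mp ⟨i, hi, rfl⟩
    obtain ⟨k', hk', hek'⟩ := (hset _).mp ⟨i', hi', rfl⟩
    have hkk' : k ≠ k' := by
      rintro rfl
      exact dec_inj hi hii' (hek.trans hek'.symm)
    funext j
    apply le_antisymm
    · obtain ⟨i1, hi1, hij⟩ : ∃ i1, lam (i1 + 1) < lam i1 ∧ i1 ≠ j := by
        rcases eq_or_ne i j with rfl | hne
        · exact ⟨i', hi', fun hh => hii' hh.symm⟩
        · exact ⟨i, hi, hne⟩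
      obtain ⟨k1, hk1, hek1⟩ := (hset _).mp ⟨i1, hi1, rfl⟩
      calc lam j = dec lam i1 j := (dec_apply_ne _ (Ne.symm hij)).symm
        _ = dec nu k1 j := by rw [hek1]
        _ ≤ nu j := dec_le _ _ _
    · obtain ⟨k1, hk1, hkj⟩ : ∃ k1, nu (k1 + 1) < nu k1 ∧ k1 ≠ j := by
        rcases eq_or_ne k j with rfl | hne
        · exact ⟨k', hk', fun hh => hkk' hh.symm⟩
        · exact ⟨k, hk, hne⟩
      obtain ⟨i1, hi1, hei1⟩ := (hset _).mpr ⟨k1, hk1, rfl⟩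
      calc nu j = dec nu k1 j := (dec_apply_ne _ (Ne.symm hkj)).symm
        _ = dec lam i1 j := by rw [hei1]
        _ ≤ lam j := dec_le _ _ _
  · push_neg at htwo
    have huniq : ∀ i, lam (i + 1) < lam i → i = i0 := fun i hi => htwo i i0 hi hi0
    have huniqv : ∀ k, nu (k + 1) < nu k → k = k0 := by
      intro k hk
      obtain ⟨i, hi, hei⟩ := (hset _).mpr ⟨k, hk, rfl⟩
      obtain ⟨i', hi', hei'⟩ := (hset _).mpr ⟨k0, hk0, rfl⟩
      have : i = i' := (huniq i hi).trans (huniq i' hi').symm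
      subst this
      by_contra hne
      exact dec_inj hk hne (hei.trans hei'.symm)
    have hr1 := rect_struct hl.1 hl.2.1 hi0 huniq
    have hr2 := rect_struct hv.1 hv.2.1 hk0 huniqv
    have hc : dec lam i0 = dec nu k0 := by
      obtain ⟨k, hk, hek⟩ := (hset _).mp ⟨i0, hi0, rfl⟩
      rwa [huniqv k hk] at hek
    have hb : 1 ≤ lam i0 := Nat.lt_of_le_of_lt (Nat.zero_le _) hi0
    have hb' : 1 ≤ nu k0 := Nat.lt_of_le_of_lt (Nat.zero_le _) hk0
    rcases Nat.lt_trichotomy i0 k0 with hlt | heq | hgt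
    · exact absurd (rect_ne hn hl.2.2 hb hb' hr1 hr2 hc hlt) (fun x => x)
    · subst heq
      have hbb : lam i0 = nu i0 := by
        have E := congrFun hc i0
        rw [dec_apply_self, dec_apply_self] at E
        omega
      funext j
      rw [hr1 j, hr2 j, hbb]
    · exact absurd (rect_ne hn hv.2.2 hb' hb hr2 hr1 hc.symm hgt) (fun x => x)

lemma case_impossible {n a1 b1 a2 : ℕ} {p q : (ℕ → ℕ) × (ℕ → ℕ)} (hn : 3 ≤ n)
    (hp1 : IsPartitionFun a1 p.1) (hp2 : IsPartitionFun b1 p.2) (hpn : a1 + b1 = n)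
    (hq1 : IsPartitionFun a2 q.1)
    (hS : ∀ x, PP p x ↔ PP q x)
    (hlp : ∃ i, p.1 (i + 1) < p.1 i) (hlq : ¬ ∃ k, q.1 (k + 1) < q.1 k) : False := by
  obtain ⟨i, hi⟩ := hlp
  rcases (hS _).mp (Or.inl ⟨i, hi, rfl⟩ : PP p (dec p.1 i, p.2)) with
    ⟨k, hk, _⟩ | ⟨l, hl, heq⟩
  · exact hlq ⟨k, hk⟩
  · have hq10 : q.1 = fun _ => 0 := (zero_of_no_dec hq1 hlq).1
    have hd0 : dec p.1 i = fun _ => 0 := by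
      have h1 : dec p.1 i = q.1 := congrArg Prod.fst heq
      rw [h1, hq10]
    have hsum1 : ∑ᶠ j, p.1 j = 1 := sum_eq_one_of_dec_eq_zero hi hd0
    have ha1 : a1 = 1 := by rw [← hp1.2.2]; exact hsum1
    have hb1 : b1 ≠ 0 := by omega
    obtain ⟨j, hj⟩ := exists_dec hp2 hb1
    rcases (hS _).mp (Or.inr ⟨j, hj, rfl⟩ : PP p (p.1, dec p.2 j)) with
      ⟨k, hk, _⟩ | ⟨l', _, heq'⟩
    · exact hlq ⟨k, hk⟩
    · have hz : p.1 = fun _ => 0 := by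
        have h1 := heq'
        rw [Prod.mk.injEq] at h1
        rw [h1.1, hq10]
      rw [hz, finsum_zero] at hsum1
      exact one_ne_zero hsum1.symm

end S3aux
open S3aux in
/-- for `n ≥ 3`, a bipartition `(λ', λ'')` of `n` is determined by
`ff_n(λ', λ'') ∈ (BP_{n-1})`. -/
theorem statement3 (n : ℕ) (hn : 3 ≤ n) (p q : (ℕ → ℕ) × (ℕ → ℕ))
    (hp : IsBipartitionFun n p) (hq : IsBipartitionFun n q)
    (h : bipartDec p = bipartDec q) : p = q := by
  obtain ⟨a1, b1, hp1, hp2, hpn⟩ := hp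
  obtain ⟨a2, b2, hq1, hq2, hqn⟩ := hq
  have hS : ∀ x, PP p x ↔ PP q x := fun x => by
    rw [← mem_iff p hp1.2.1 hp2.2.1 x, ← mem_iff q hq1.2.1 hq2.2.1 x, h]
  by_cases hlp : ∃ i, p.1 (i + 1) < p.1 i
  · by_cases hlq : ∃ k, q.1 (k + 1) < q.1 k
    · -- main case: both first components nonzero
      have hB : ∀ i, p.1 (i + 1) < p.1 i → ∀ l, q.2 (l + 1) < q.2 l →
          (dec p.1 i, p.2) ≠ (q.1, dec q.2 l) := by
        intro i hi l hl heq
        rw [Prod.mk.injEq] at heq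
        obtain ⟨hnu, hmu⟩ := heq
        obtain ⟨k, hk⟩ := hlq
        rcases (hS _).mpr (Or.inl ⟨k, hk, rfl⟩ : PP q (dec q.1 k, q.2)) with
          ⟨i2, hi2, hx⟩ | ⟨j, hj, hx⟩
        · rw [Prod.mk.injEq] at hx
          exact dec_ne hl (hx.2.trans hmu).symm
        · rw [Prod.mk.injEq] at hx
          have hpk : p.1 = dec (dec p.1 i) k := by
            rw [← hnu] at hx
            exact hx.1.symm
          have hL := congrFun hpk i
          rcases eq_or_ne i k with rfl | hik
          · rw [dec_apply_self, dec_apply_self] at hL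
            omega
          · rw [dec_apply_ne _ hik, dec_apply_self] at hL
            omega
      obtain ⟨i, hi⟩ := hlp
      rcases (hS _).mp (Or.inl ⟨i, hi, rfl⟩ : PP p (dec p.1 i, p.2)) with
        ⟨k, hk, hx⟩ | ⟨l, hl, hx⟩
      swap
      · exact absurd hx (hB i hi l hl)
      rw [Prod.mk.injEq] at hx
      have hmurho : p.2 = q.2 := hx.2
      by_cases hmu : ∃ j, p.2 (j + 1) < p.2 j
      · obtain ⟨j, hj⟩ := hmu
        rcases (hS _).mp (Or.inr ⟨j, hj, rfl⟩ : PP p (p.1, dec p.2 j)) with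
          ⟨k2, hk2, hy⟩ | ⟨l, hl, hy⟩
        · rw [Prod.mk.injEq] at hy
          exact absurd (hy.2.trans hmurho.symm) (dec_ne hj)
        · rw [Prod.mk.injEq] at hy
          exact Prod.ext hy.1 hmurho
      · obtain ⟨hz2, hb10⟩ := zero_of_no_dec hp2 hmu
        have hmq : ¬ ∃ l, q.2 (l + 1) < q.2 l := by rw [← hmurho]; exact hmu
        obtain ⟨hzq2, hb20⟩ := zero_of_no_dec hq2 hmq
        have ha1 : a1 = n := by omega
        have ha2 : a2 = n := by omega
        have hfirst : p.1 = q.1 := by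
          apply decs_inj (ha1 ▸ hp1) (ha2 ▸ hq1) hn
          intro x
          constructor
          · rintro ⟨i', hi', rfl⟩
            rcases (hS _).mp (Or.inl ⟨i', hi', rfl⟩ : PP p (dec p.1 i', p.2)) with
              ⟨k', hk', hw⟩ | ⟨l', hl', hw⟩
            · rw [Prod.mk.injEq] at hw
              exact ⟨k', hk', hw.1⟩
            · exact absurd ⟨l', hl'⟩ hmq
          · rintro ⟨k', hk', rfl⟩
            rcases (hS _).mpr (Or.inl ⟨k', hk', rfl⟩ : PP q (dec q.1 k', q.2)) with
              ⟨i', hi', hw⟩ | ⟨l', hl', hw⟩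
            · rw [Prod.mk.injEq] at hw
              exact ⟨i', hi', hw.1⟩
            · exact absurd ⟨l', hl'⟩ hmu
        exact Prod.ext hfirst hmurho
    · exact absurd (case_impossible hn hp1 hp2 hpn hq1 hS hlp hlq) (fun x => x)
  · by_cases hlq : ∃ k, q.1 (k + 1) < q.1 k
    · exact absurd (case_impossible hn hq1 hq2 hqn hp1 (fun x => (hS x).symm) hlq hlp)
        (fun x => x)
    · obtain ⟨hz1, ha10⟩ := zero_of_no_dec hp1 hlp
      obtain ⟨hzq1, ha20⟩ := zero_of_no_dec hq1 hlq
      have hfq : p.1 = q.1 := hz1.trans hzq1.symm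
      have hb1 : b1 = n := by omega
      have hb2 : b2 = n := by omega
      have hsecond : p.2 = q.2 := by
        apply decs_inj (hb1 ▸ hp2) (hb2 ▸ hq2) hn
        intro x
        constructor
        · rintro ⟨j, hj, rfl⟩
          rcases (hS _).mp (Or.inr ⟨j, hj, rfl⟩ : PP p (p.1, dec p.2 j)) with
            ⟨k', hk', hw⟩ | ⟨l', hl', hw⟩
          · exact absurd ⟨k', hk'⟩ hlq
          · rw [Prod.mk.injEq] at hw
            exact ⟨l', hl', hw.2⟩
        · rintro ⟨l, hl, rfl⟩
          rcases (hS _).mpr (Or.inr ⟨l, hl, rfl⟩ : PP q (q.1, dec q.2 l)) with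
            ⟨i', hi', hw⟩ | ⟨j', hj', hw⟩
          · exact absurd ⟨i', hi'⟩ hlp
          · rw [Prod.mk.injEq] at hw
            exact ⟨j', hj', hw.2⟩
      exact Prod.ext hfq hsecond
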